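/- The function t ↦ √(li⁻¹(t)) is concave for t > li(e²), where li⁻¹ is the inverse of the logarithmic integral. -/

import Mathlib

open Real Set

theorem stmt11 (li liInv : ℝ → ℝ)
    (hderiv : ∀ x : ℝ, 1 < x → HasDerivAt li (1 / Real.log x) x)
    (hbij : Set.BijOn li (Set.Ioi 1) Set.univ)
    (hinv : ∀ x : ℝ, 1 < x → liInv (li x) = x) :
    ConcaveOn ℝ (Set.Ioi (li (Real.exp 2))) (fun t => Real.sqrt (liInv t)) := by
  -- li is continuous and strictly monotone on Ioi 1
  have hcont : ContinuousOn li (Set.Ioi 1) := fun x hx =>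
    (hderiv x hx).continuousAt.continuousWithinAt
  have hmono : StrictMonoOn li (Set.Ioi 1) := by
    apply strictMonoOn_of_deriv_pos (convex_Ioi 1) hcont
    intro x hx
    rw [interior_Ioi] at hx
    rw [(hderiv x hx).deriv]
    exact div_pos one_pos (Real.log_pos hx)
  -- order iso
  have hsm : StrictMono (fun x : Set.Ioi (1:ℝ) => li x) := fun a b hab =>
    hmono a.2 b.2 hab
  have hsurj : Function.Surjective (fun x : Set.Ioi (1:ℝ) => li x) := by
    intro y
    obtain ⟨x, hx, hxy⟩ := hbij.surjOn (Set.mem_univ y)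
    exact ⟨⟨x, hx⟩, hxy⟩
  let e := StrictMono.orderIsoOfSurjective _ hsm hsurj
  have hle : ∀ y, liInv y = ((e.symm y : Set.Ioi (1:ℝ)) : ℝ) := by
    intro y
    have h1 := (e.symm y).2
    have h2 : li ((e.symm y : Set.Ioi (1:ℝ)) : ℝ) = y :=
      StrictMono.orderIsoOfSurjective_self_symm_apply _ hsm hsurj y
    calc liInv y = liInv (li ((e.symm y : Set.Ioi (1:ℝ)) : ℝ)) := by rw [h2]
    _ = _ := hinv _ h1
  have hgt1 : ∀ y, 1 < liInv y := fun y => by rw [hle y]; exact (e.symm y).2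
  have hpos : ∀ y, 0 < liInv y := fun y => lt_trans one_pos (hgt1 y)
  have hliRight : ∀ y, li (liInv y) = y := by
    intro y
    rw [hle y]
    exact StrictMono.orderIsoOfSurjective_self_symm_apply _ hsm hsurj y
  have hcInv : Continuous liInv := by
    have : Continuous (fun y => ((e.symm y : Set.Ioi (1:ℝ)) : ℝ)) :=
      continuous_subtype_val.comp e.symm.continuous
    exact this.congr fun y => (hle y).symm
  have hmonoInv : StrictMono liInv := by
    intro a b hab
    rw [hle a, hle b]
    exact_mod_cast e.symm.strictMono hab
  -- derivative of liInv
  have hderivInv : ∀ t : ℝ, HasDerivAt liInv (Real.log (liInv t)) t := by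
    intro t
    have h1 := hgt1 t
    have hlogpos := Real.log_pos h1
    have := HasDerivAt.of_local_left_inverse hcInv.continuousAt (hderiv _ h1)
      (ne_of_gt (div_pos one_pos hlogpos))
      (Filter.Eventually.of_forall hliRight)
    simpa [one_div] using this
  -- derivative of t ↦ √(liInv t)
  have hg : ∀ t : ℝ, HasDerivAt (fun s => Real.sqrt (liInv s))
      (Real.log (liInv t) / (2 * Real.sqrt (liInv t))) t := by
    intro t
    have h := (Real.hasDerivAt_sqrt (ne_of_gt (hpos t))).comp t (hderivInv t)
    exact h.congr_deriv (by ring)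
  -- the auxiliary function is antitone on [e², ∞)
  have hAux : AntitoneOn (fun x => Real.log x / (2 * Real.sqrt x)) (Set.Ici (Real.exp 2)) := by
    apply antitoneOn_of_deriv_nonpos (convex_Ici _)
    · apply ContinuousOn.div
      · exact Real.continuousOn_log.mono (fun x hx => ne_of_gt (lt_of_lt_of_le (Real.exp_pos 2) hx))
      · exact (continuous_const.mul Real.continuous_sqrt).continuousOn
      · intro x hx
        have : 0 < x := lt_of_lt_of_le (Real.exp_pos 2) hx
        positivity
    · intro x hx
      rw [interior_Ici] at hx
      have hx0 : 0 < x := lt_trans (Real.exp_pos 2) hx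
      exact (((Real.hasDerivAt_log (ne_of_gt hx0)).div
        ((Real.hasDerivAt_sqrt (ne_of_gt hx0)).const_mul 2)
        (by positivity)).differentiableAt).differentiableWithinAt
    · intro x hx
      rw [interior_Ici] at hx
      have hx0 : 0 < x := lt_trans (Real.exp_pos 2) hx
      have hs : Real.sqrt x * Real.sqrt x = x := Real.mul_self_sqrt hx0.le
      have hs0 : 0 < Real.sqrt x := Real.sqrt_pos.mpr hx0
      have hlog : 2 ≤ Real.log x := by
        rw [show (2:ℝ) = Real.log (Real.exp 2) from (Real.log_exp 2).symm]
        exact Real.log_le_log (Real.exp_pos 2) hx.le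
      have hD : HasDerivAt (fun x => Real.log x / (2 * Real.sqrt x))
          ((x⁻¹ * (2 * Real.sqrt x) - Real.log x * (2 * (1 / (2 * Real.sqrt x)))) /
            (2 * Real.sqrt x)^2) x :=
        (Real.hasDerivAt_log (ne_of_gt hx0)).div
          ((Real.hasDerivAt_sqrt (ne_of_gt hx0)).const_mul 2) (by positivity)
      rw [hD.deriv]
      apply div_nonpos_of_nonpos_of_nonneg _ (by positivity)
      have key : x⁻¹ * (2 * Real.sqrt x) - Real.log x * (2 * (1 / (2 * Real.sqrt x)))
          = (2 - Real.log x) / Real.sqrt x := by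
        field_simp
        linear_combination 2 * hs
      rw [key]
      apply div_nonpos_of_nonpos_of_nonneg (by linarith) hs0.le
  -- main application
  apply AntitoneOn.concaveOn_of_deriv (convex_Ioi _)
  · exact (Real.continuous_sqrt.comp hcInv).continuousOn
  · intro t _
    exact ((hg t).differentiableAt).differentiableWithinAt
  · rw [interior_Ioi]
    intro a ha b hb hab
    rw [(hg a).deriv, (hg b).deriv]
    have hmemD : ∀ t ∈ Set.Ioi (li (Real.exp 2)), Real.exp 2 < liInv t := by
      intro t ht
      have h2 : liInv (li (Real.exp 2)) = Real.exp 2 := hinv _ (by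
        rw [show (1:ℝ) = Real.exp 0 from (Real.exp_zero).symm]
        exact Real.exp_lt_exp.mpr (by norm_num))
      calc Real.exp 2 = liInv (li (Real.exp 2)) := h2.symm
      _ < liInv t := hmonoInv ht
    exact hAux (le_of_lt (hmemD a ha)) (le_of_lt (hmemD b hb)) (hmonoInv.monotone hab)
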